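/- arXiv:1011.2926 — 5 statements merged into one kernel-verified Lean document; each statement's English description precedes it below -/
import Mathlib

section
/- In a category of fibrant objects, every weak equivalence f : A → B factors as f = p ∘ i, where p : Nf → B is a trivial fibration and i : A → Nf is a section of a trivial fibration (in particular i is a weak equivalence), where Nf = A ×_B B^I is the mapping path-object. -/
open CategoryTheory CategoryTheory.Limits

universe v u

attribute [local simp] prod.lift_fst prod.lift_snd prod.lift_fst_assoc prod.lift_snd_assoc pullback.lift_fst pullback.lift_snd pullback.lift_fst_assoc pullback.lift_snd_assoc

/-- A category of fibrant objects in the sense of K. Brown: a category with a terminal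
object, equipped with subcategories of fibrations and of weak equivalences, such that
fibrations are closed under composition, contain isomorphisms, are stable under pullback
(pullbacks of fibrations exist), every map to the terminal object is a fibration, weak
equivalences contain isomorphisms and satisfy two-out-of-three, trivial fibrations are
stable under pullback, and every object has a path object. -/
structure FibrantCategory (C : Type u) [Category.{v} C] [HasBinaryProducts C] where
  /-- fibrations -/
  Fib : MorphismProperty C
  /-- weak equivalences -/
  Weq : MorphismProperty C
  /-- the terminal object -/
  term : C
  isTerminal : IsTerminal term
  fib_comp : ∀ {A B D : C} (f : A ⟶ B) (g : B ⟶ D), Fib f → Fib g → Fib (f ≫ g)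
  fib_iso : ∀ {A B : C} (f : A ⟶ B) [IsIso f], Fib f
  weq_iso : ∀ {A B : C} (f : A ⟶ B) [IsIso f], Weq f
  weq_comp : ∀ {A B D : C} (f : A ⟶ B) (g : B ⟶ D), Weq f → Weq g → Weq (f ≫ g)
  weq_of_comp_left : ∀ {A B D : C} (f : A ⟶ B) (g : B ⟶ D), Weq g → Weq (f ≫ g) → Weq f
  weq_of_comp_right : ∀ {A B D : C} (f : A ⟶ B) (g : B ⟶ D), Weq f → Weq (f ≫ g) → Weq g
  fib_term : ∀ A : C, Fib (isTerminal.from A)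
  hasPullback_of_fib : ∀ {A B E : C} (f : A ⟶ B) (p : E ⟶ B), Fib p → HasPullback f p
  fib_pullback : ∀ {A B E : C} (f : A ⟶ B) (p : E ⟶ B) [HasPullback f p],
    Fib p → Fib (pullback.fst f p)
  trivFib_pullback : ∀ {A B E : C} (f : A ⟶ B) (p : E ⟶ B) [HasPullback f p],
    Fib p → Weq p → Fib (pullback.fst f p) ∧ Weq (pullback.fst f p)
  path : ∀ B : C, ∃ (PI : C) (s : B ⟶ PI) (d₀ d₁ : PI ⟶ B),
    Weq s ∧ Fib (prod.lift d₀ d₁) ∧ s ≫ d₀ = 𝟙 B ∧ s ≫ d₁ = 𝟙 B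
lemma FibrantCategory.fib_snd {C : Type u} [Category.{v} C] [HasBinaryProducts C]
    (FC : FibrantCategory C) (X Y : C) : FC.Fib (prod.snd : X ⨯ Y ⟶ Y) := by
  haveI := FC.hasPullback_of_fib (FC.isTerminal.from Y) (FC.isTerminal.from X) (FC.fib_term X)
  have hK : FC.Fib (pullback.fst (FC.isTerminal.from Y) (FC.isTerminal.from X)) :=
    FC.fib_pullback _ _ (FC.fib_term X)
  let h : (X ⨯ Y) ⟶ pullback (FC.isTerminal.from Y) (FC.isTerminal.from X) :=
    pullback.lift prod.snd prod.fst (FC.isTerminal.hom_ext _ _)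
  haveI : IsIso h := by
    refine ⟨prod.lift (pullback.snd _ _) (pullback.fst _ _), ?_, ?_⟩
    · apply Limits.prod.hom_ext <;> simp [h]
    · apply pullback.hom_ext <;> simp [h]
  have e : (prod.snd : X ⨯ Y ⟶ Y) = h ≫ pullback.fst _ _ := by simp [h]
  rw [e]; exact FC.fib_comp _ _ (FC.fib_iso h) hK

lemma FibrantCategory.fib_fst {C : Type u} [Category.{v} C] [HasBinaryProducts C]
    (FC : FibrantCategory C) (X Y : C) : FC.Fib (prod.fst : X ⨯ Y ⟶ X) := by
  have e : (prod.fst : X ⨯ Y ⟶ X) = (prod.braiding X Y).hom ≫ prod.snd := by simp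
  rw [e]; exact FC.fib_comp _ _ (FC.fib_iso _) (FC.fib_snd Y X)

/-- Brown's Factorization Lemma, specialized to weak equivalences: in a category of fibrant
objects, every weak equivalence `f : A ⟶ B` factors as `f = i ≫ p` where `p` is a trivial
fibration and `i` is a section of a trivial fibration (in particular a weak equivalence). -/
theorem factorization_of_weq {C : Type u} [Category.{v} C] [HasBinaryProducts C]
    (FC : FibrantCategory C) {A B : C} (f : A ⟶ B) (hf : FC.Weq f) :
    ∃ (N : C) (i : A ⟶ N) (p : N ⟶ B) (q : N ⟶ A),
      i ≫ p = f ∧ FC.Fib p ∧ FC.Weq p ∧ FC.Fib q ∧ FC.Weq q ∧ i ≫ q = 𝟙 A ∧ FC.Weq i := by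
  obtain ⟨PI, s, d₀, d₁, hWs, hFπ, hs0, hs1⟩ := FC.path B
  set π : PI ⟶ B ⨯ B := prod.lift d₀ d₁ with hπ
  have hFd₀ : FC.Fib d₀ := by
    have e : d₀ = π ≫ prod.fst := by simp [hπ]
    rw [e]; exact FC.fib_comp _ _ hFπ (FC.fib_fst B B)
  have hWd₀ : FC.Weq d₀ := by
    refine FC.weq_of_comp_right s d₀ hWs ?_
    rw [hs0]; exact FC.weq_iso _
  haveI : HasPullback f d₀ := FC.hasPullback_of_fib f d₀ hFd₀
  set N := pullback f d₀ with hN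
  set q : N ⟶ A := pullback.fst f d₀ with hq
  obtain ⟨hFq, hWq⟩ := FC.trivFib_pullback f d₀ hFd₀ hWd₀
  set i : A ⟶ N := pullback.lift (𝟙 A) (f ≫ s) (by simp [hs0]) with hi
  have hiq : i ≫ q = 𝟙 A := by simp [hi, hq]
  have hWi : FC.Weq i := by
    refine FC.weq_of_comp_left i q hWq ?_
    rw [hiq]; exact FC.weq_iso _
  set p : N ⟶ B := pullback.snd f d₀ ≫ d₁ with hp
  have hip : i ≫ p = f := by simp [hi, hp, hs1]
  have hWp : FC.Weq p := FC.weq_of_comp_right i p hWi (by rw [hip]; exact hf)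
  -- Fibration part: p = (prod.lift q (pullback.snd f d₀ ≫ d₁)) ≫ prod.snd,
  -- and the lift is iso to pullback.fst of π along f × 𝟙.
  haveI : HasPullback (prod.map f (𝟙 B)) π := FC.hasPullback_of_fib _ _ hFπ
  set M := pullback (prod.map f (𝟙 B)) π with hM
  have hcomm : (prod.lift q p : N ⟶ A ⨯ B) ≫ prod.map f (𝟙 B) = pullback.snd f d₀ ≫ π := by
    apply Limits.prod.hom_ext <;> simp [hq, hp, hπ, pullback.condition]
  set φ : N ⟶ M := pullback.lift (prod.lift q p) (pullback.snd f d₀) hcomm with hφ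
  have hcomm2 : (pullback.fst (prod.map f (𝟙 B)) π ≫ prod.fst) ≫ f
      = pullback.snd (prod.map f (𝟙 B)) π ≫ d₀ := by
    have := pullback.condition (f := prod.map f (𝟙 B)) (g := π)
    have h' := congrArg (fun t => t ≫ (prod.fst : B ⨯ B ⟶ B)) this
    simpa [hπ] using h'
  set ψ : M ⟶ N := pullback.lift (pullback.fst _ _ ≫ prod.fst) (pullback.snd _ _) hcomm2 with hψ
  haveI : IsIso φ := by
    refine ⟨ψ, ?_, ?_⟩
    · apply pullback.hom_ext <;> simp [hφ, hψ, hq]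
    · apply pullback.hom_ext
      · apply Limits.prod.hom_ext
        · simp [hφ, hψ, hq]
        · have := pullback.condition (f := prod.map f (𝟙 B)) (g := π)
          have h' := congrArg (fun t => t ≫ (prod.snd : B ⨯ B ⟶ B)) this
          simp only [Category.assoc] at h'
          simp [hφ, hψ, hp, hπ] at h' ⊢
          simpa using h'.symm
      · simp [hφ, hψ]
  have hFlift : FC.Fib (prod.lift q p : N ⟶ A ⨯ B) := by
    have e : (prod.lift q p : N ⟶ A ⨯ B) = φ ≫ pullback.fst (prod.map f (𝟙 B)) π := by
      simp [hφ]
    rw [e]; exact FC.fib_comp _ _ (FC.fib_iso φ) (FC.fib_pullback _ _ hFπ)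
  have hFp : FC.Fib p := by
    have e : p = (prod.lift q p : N ⟶ A ⨯ B) ≫ prod.snd := by simp
    rw [e]; exact FC.fib_comp _ _ hFlift (FC.fib_snd A B)
  exact ⟨N, i, p, q, hip, hFp, hWp, hFq, hWq, hiq, hWi⟩
end

section
/- Let C be a category of fibrant objects and D a category with a subcategory of weak equivalences (containing isomorphisms and satisfying two-out-of-three). If a functor F : C → D sends trivial fibrations to weak equivalences, then F sends all weak equivalences to weak equivalences. -/
open CategoryTheory CategoryTheory.Limits

universe v u

attribute [local simp] prod.lift_fst prod.lift_snd prod.lift_fst_assoc prod.lift_snd_assoc pullback.lift_fst pullback.lift_snd pullback.lift_fst_assoc pullback.lift_snd_assoc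

variable {C : Type u} [Category.{v} C] [HasBinaryProducts C] (FC : FibrantCategory C)

lemma fib_prod_fst (A B : C) : FC.Fib (prod.fst : A ⨯ B ⟶ A) := by
  have : HasPullback (FC.isTerminal.from A) (FC.isTerminal.from B) :=
    FC.hasPullback_of_fib _ _ (FC.fib_term B)
  have H : IsLimit (PullbackCone.mk (prod.fst : A ⨯ B ⟶ A) prod.snd
      (FC.isTerminal.hom_ext (prod.fst ≫ FC.isTerminal.from A)
        (prod.snd ≫ FC.isTerminal.from B))) :=
    isPullbackOfIsTerminalIsProduct _ _ _ _ FC.isTerminal (prodIsProd A B)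
  have he : (IsLimit.conePointUniqueUpToIso (limit.isLimit _) H).hom ≫
      (prod.fst : A ⨯ B ⟶ A) = pullback.fst (FC.isTerminal.from A) (FC.isTerminal.from B) :=
    IsLimit.conePointUniqueUpToIso_hom_comp (limit.isLimit _) H WalkingCospan.left
  have heq : (prod.fst : A ⨯ B ⟶ A) = (IsLimit.conePointUniqueUpToIso (limit.isLimit _) H).inv ≫
      pullback.fst (FC.isTerminal.from A) (FC.isTerminal.from B) := by
    rw [← he]; exact (Iso.inv_hom_id_assoc _ _).symm
  rw [heq]
  exact FC.fib_comp _ _ (@FibrantCategory.fib_iso _ _ _ FC _ _ _ (Iso.isIso_inv _)) (FC.fib_pullback _ _ (FC.fib_term B))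

lemma fib_prod_snd (A B : C) : FC.Fib (prod.snd : A ⨯ B ⟶ B) := by
  have : (prod.snd : A ⨯ B ⟶ B) = (prod.braiding A B).hom ≫ prod.fst := by simp
  rw [this]
  exact FC.fib_comp _ _ (FC.fib_iso _) (fib_prod_fst FC B A)

/-- If a functor from a category of fibrant objects to a category with weak equivalences
sends trivial fibrations to weak equivalences, then it sends all weak equivalences to
weak equivalences. -/
theorem functor_preserves_weq {C : Type u} [Category.{v} C] [HasBinaryProducts C]
    (FC : FibrantCategory C) {D : Type*} [Category D] (WD : MorphismProperty D)
    (WD_iso : ∀ {X Y : D} (f : X ⟶ Y) [IsIso f], WD f)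
    (WD_comp : ∀ {X Y Z : D} (f : X ⟶ Y) (g : Y ⟶ Z), WD f → WD g → WD (f ≫ g))
    (WD_of_comp_left : ∀ {X Y Z : D} (f : X ⟶ Y) (g : Y ⟶ Z), WD g → WD (f ≫ g) → WD f)
    (WD_of_comp_right : ∀ {X Y Z : D} (f : X ⟶ Y) (g : Y ⟶ Z), WD f → WD (f ≫ g) → WD g)
    (F : C ⥤ D)
    (hF : ∀ {X Y : C} (f : X ⟶ Y), FC.Fib f → FC.Weq f → WD (F.map f)) :
    ∀ {X Y : C} (f : X ⟶ Y), FC.Weq f → WD (F.map f) := by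
  intro X Y f hf
  obtain ⟨PI, s, d₀, d₁, hs, hlift, hsd₀, hsd₁⟩ := FC.path Y
  -- d₀, d₁ are trivial fibrations
  have hd₀fib : FC.Fib d₀ := by
    have : d₀ = prod.lift d₀ d₁ ≫ prod.fst := by simp
    rw [this]; exact FC.fib_comp _ _ hlift (fib_prod_fst FC Y Y)
  have hd₀weq : FC.Weq d₀ := FC.weq_of_comp_right s d₀ hs (by rw [hsd₀]; exact FC.weq_iso _)
  have hd₁weq : FC.Weq d₁ := FC.weq_of_comp_right s d₁ hs (by rw [hsd₁]; exact FC.weq_iso _)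
  -- mapping path space
  have hpb : HasPullback f d₀ := FC.hasPullback_of_fib f d₀ hd₀fib
  set p1 : pullback f d₀ ⟶ X := pullback.fst f d₀ with hp1
  set p2 : pullback f d₀ ⟶ PI := pullback.snd f d₀ with hp2
  have hcond : p1 ≫ f = p2 ≫ d₀ := pullback.condition
  -- p1 is a trivial fibration
  obtain ⟨hp1fib, hp1weq⟩ := FC.trivFib_pullback f d₀ hd₀fib hd₀weq
  -- the section i
  have hcomm : (𝟙 X) ≫ f = (f ≫ s) ≫ d₀ := by rw [Category.assoc, hsd₀]; simp
  set i : X ⟶ pullback f d₀ := pullback.lift (𝟙 X) (f ≫ s) hcomm with hi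
  have hip1 : i ≫ p1 = 𝟙 X := by simp [hi, hp1]
  -- q = p2 ≫ d₁, and f = i ≫ q
  set q : pullback f d₀ ⟶ Y := p2 ≫ d₁ with hq
  have hiq : i ≫ q = f := by
    rw [hq, ← Category.assoc, hi, hp2]
    simp [hsd₁]
  -- q is a fibration: E ≅ pullback (prod.map f (𝟙 Y)) (prod.lift d₀ d₁)
  have hpb2 : HasPullback (prod.map f (𝟙 Y)) (prod.lift d₀ d₁) :=
    FC.hasPullback_of_fib _ _ hlift
  have hφcond : prod.lift p1 q ≫ prod.map f (𝟙 Y) = p2 ≫ prod.lift d₀ d₁ := by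
    apply Limits.prod.hom_ext <;> simp [hq, hcond]
  set φ : pullback f d₀ ⟶ pullback (prod.map f (𝟙 Y)) (prod.lift d₀ d₁) :=
    pullback.lift (prod.lift p1 q) p2 hφcond with hφ
  have hψcond : (pullback.fst (prod.map f (𝟙 Y)) (prod.lift d₀ d₁) ≫ prod.fst) ≫ f =
      pullback.snd (prod.map f (𝟙 Y)) (prod.lift d₀ d₁) ≫ d₀ := by
    have := pullback.condition (f := prod.map f (𝟙 Y)) (g := prod.lift d₀ d₁)
    have h1 := this =≫ (prod.fst : Y ⨯ Y ⟶ Y)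
    simpa using h1
  set ψ : pullback (prod.map f (𝟙 Y)) (prod.lift d₀ d₁) ⟶ pullback f d₀ :=
    pullback.lift (pullback.fst _ _ ≫ prod.fst) (pullback.snd _ _) hψcond with hψ
  have hφψ : φ ≫ ψ = 𝟙 _ := by
    apply pullback.hom_ext <;> simp [hφ, hψ, hp1, hp2]
  have hψφ : ψ ≫ φ = 𝟙 _ := by
    apply pullback.hom_ext
    · apply Limits.prod.hom_ext
      · simp [hφ, hψ, hp1]
      · have := pullback.condition (f := prod.map f (𝟙 Y)) (g := prod.lift d₀ d₁)
        have h2 := this =≫ (prod.snd : Y ⨯ Y ⟶ Y)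
        simp only [Category.assoc, prod.map_snd, prod.lift_snd, Category.comp_id] at h2
        simp [hφ, hψ, hq, hp2, ← h2]
    · simp [hφ, hψ, hp2]
  have : IsIso φ := ⟨ψ, hφψ, hψφ⟩
  have hqfib : FC.Fib q := by
    have h1 : FC.Fib (pullback.fst (prod.map f (𝟙 Y)) (prod.lift d₀ d₁)) :=
      FC.fib_pullback _ _ hlift
    have heq : q = φ ≫ pullback.fst (prod.map f (𝟙 Y)) (prod.lift d₀ d₁) ≫ prod.snd := by
      simp [hφ, hq]
    rw [heq, ← Category.assoc]
    exact FC.fib_comp _ _ (FC.fib_comp _ _ (FC.fib_iso _) h1) (fib_prod_snd FC X Y)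
  -- q is a weak equivalence since f = i ≫ q and i is weq
  have hiweq : FC.Weq i := FC.weq_of_comp_left i p1 hp1weq (by rw [hip1]; exact FC.weq_iso _)
  have hqweq : FC.Weq q := FC.weq_of_comp_right i q hiweq (by rw [hiq]; exact hf)
  -- conclude in D
  have hFq : WD (F.map q) := hF q hqfib hqweq
  have hFp1 : WD (F.map p1) := hF p1 hp1fib hp1weq
  have hFi : WD (F.map i) := by
    apply WD_of_comp_left (F.map i) (F.map p1) hFp1
    rw [← F.map_comp, hip1, F.map_id]
    exact WD_iso _
  rw [← hiq, F.map_comp]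
  exact WD_comp _ _ hFi hFq
end

section
/- In a pointed category of fibrant objects, if p : E → B is a fibration with fibre F (the pullback of p along the zero object's map * → B), then the canonical map from F to the homotopy fibre of p (the fibre of the fibration Np → B from the mapping path-object factorization) is a weak equivalence. -/
open CategoryTheory CategoryTheory.Limits

universe v u

section AuxLemmas

variable {C : Type u} [Category.{v} C] [HasBinaryProducts C]

/-- In a pullback square, if the right leg is a fibration then so is the left leg. -/
lemma FibrantCategory.fib_of_isPullback (FC : FibrantCategory C) {P X Y Z : C}
    {h : P ⟶ X} {k : P ⟶ Y} {f : X ⟶ Z} {g : Y ⟶ Z}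
    (sq : IsPullback h k f g) (hg : FC.Fib g) : FC.Fib h := by
  haveI := FC.hasPullback_of_fib f g hg
  have e : sq.isoPullback.hom ≫ pullback.fst f g = h := sq.isoPullback_hom_fst
  rw [← e]
  exact FC.fib_comp _ _ (FC.fib_iso _) (FC.fib_pullback f g hg)

/-- In a pullback square, if the right leg is a trivial fibration then so is the left
leg. -/
lemma FibrantCategory.trivFib_of_isPullback (FC : FibrantCategory C) {P X Y Z : C}
    {h : P ⟶ X} {k : P ⟶ Y} {f : X ⟶ Z} {g : Y ⟶ Z}
    (sq : IsPullback h k f g) (hg : FC.Fib g) (hg' : FC.Weq g) :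
    FC.Fib h ∧ FC.Weq h := by
  haveI := FC.hasPullback_of_fib f g hg
  obtain ⟨h1, h2⟩ := FC.trivFib_pullback f g hg hg'
  have e : sq.isoPullback.hom ≫ pullback.fst f g = h := sq.isoPullback_hom_fst
  constructor
  · rw [← e]; exact FC.fib_comp _ _ (FC.fib_iso _) h1
  · rw [← e]; exact FC.weq_comp _ _ (FC.weq_iso _) h2

/-- Product projections are fibrations. -/
lemma FibrantCategory.fib_prod (FC : FibrantCategory C) (X Y : C) :
    FC.Fib (prod.fst : X ⨯ Y ⟶ X) ∧ FC.Fib (prod.snd : X ⨯ Y ⟶ Y) := by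
  have sq := IsPullback.of_is_product' (prodIsProd X Y) FC.isTerminal
  exact ⟨FC.fib_of_isPullback sq (FC.fib_term Y),
    FC.fib_of_isPullback sq.flip (FC.fib_term X)⟩

/-- The legs of a path object are trivial fibrations. -/
lemma FibrantCategory.path_triv (FC : FibrantCategory C) {B PI : C} {s : B ⟶ PI}
    {d₀ d₁ : PI ⟶ B} (hs : FC.Weq s) (hd : FC.Fib (prod.lift d₀ d₁))
    (h₀ : s ≫ d₀ = 𝟙 B) (h₁ : s ≫ d₁ = 𝟙 B) :
    (FC.Fib d₀ ∧ FC.Weq d₀) ∧ (FC.Fib d₁ ∧ FC.Weq d₁) := by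
  refine ⟨⟨?_, ?_⟩, ⟨?_, ?_⟩⟩
  · have := FC.fib_comp _ _ hd (FC.fib_prod B B).1
    rwa [prod.lift_fst] at this
  · exact FC.weq_of_comp_right s d₀ hs (by rw [h₀]; exact FC.weq_iso _)
  · have := FC.fib_comp _ _ hd (FC.fib_prod B B).2
    rwa [prod.lift_snd] at this
  · exact FC.weq_of_comp_right s d₁ hs (by rw [h₁]; exact FC.weq_iso _)

end AuxLemmas

/-- In a pointed category of fibrant objects (terminal object is also initial), given a
fibration `p : E ⟶ B` with fibre `F` (the pullback of `p` along `* ⟶ B`), and given the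
mapping path object `Np = E ×_B B^I` with its fibration `p' = snd ≫ d₁ : Np ⟶ B` whose fibre
`HF` is the homotopy fibre of `p`, the canonical map `F ⟶ HF` (characterized by its two
components into the pullback `Np`) is a weak equivalence. -/
theorem fibre_weq_homotopyFibre {C : Type u} [Category.{v} C] [HasBinaryProducts C]
    (FC : FibrantCategory C) (hInit : IsInitial FC.term)
    {E B : C} (p : E ⟶ B) (hp : FC.Fib p)
    -- a path object for B
    (PI : C) (s : B ⟶ PI) (d₀ d₁ : PI ⟶ B)
    (hs : FC.Weq s) (hd : FC.Fib (prod.lift d₀ d₁)) (hs₀ : s ≫ d₀ = 𝟙 B) (hs₁ : s ≫ d₁ = 𝟙 B)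
    [HasPullback p d₀]
    -- the fibre F of p
    {F : C} (i : F ⟶ E) (hw : i ≫ p = FC.isTerminal.from F ≫ hInit.to B)
    (hlim : Nonempty (IsLimit (PullbackCone.mk i (FC.isTerminal.from F) hw)))
    -- the homotopy fibre HF of p: the fibre of p' = snd ≫ d₁ : Np ⟶ B
    {HF : C} (j : HF ⟶ pullback p d₀)
    (hw' : j ≫ (pullback.snd p d₀ ≫ d₁) = FC.isTerminal.from HF ≫ hInit.to B)
    (hlim' : Nonempty (IsLimit (PullbackCone.mk j (FC.isTerminal.from HF) hw'))) :
    ∀ u : F ⟶ HF, u ≫ j ≫ pullback.fst p d₀ = i → u ≫ j ≫ pullback.snd p d₀ = i ≫ p ≫ s →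
      FC.Weq u := by
  intro u hu1 hu2
  obtain ⟨⟨hd₀f, hd₀w⟩, ⟨hd₁f, hd₁w⟩⟩ := FC.path_triv hs hd hs₀ hs₁
  -- extensionality for the abstract fibres F and HF
  have mono_i : ∀ {T : C} (f g : T ⟶ F), f ≫ i = g ≫ i → f = g := by
    intro T f g hfg
    exact PullbackCone.IsLimit.hom_ext hlim.some hfg
      (FC.isTerminal.hom_ext _ _)
  have mono_j : ∀ {T : C} (f g : T ⟶ HF), f ≫ j = g ≫ j → f = g := by
    intro T f g hfg
    exact PullbackCone.IsLimit.hom_ext hlim'.some hfg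
      (FC.isTerminal.hom_ext _ _)
  -- basic facts about Np = pullback p d₀
  have hfst0 := FC.trivFib_pullback p d₀ hd₀f hd₀w
  have hsnd0 : FC.Fib (pullback.snd p d₀) :=
    FC.fib_of_isPullback (IsPullback.of_hasPullback p d₀).flip hp
  -- the weak equivalence a : E ⟶ Np, a = (1, p ≫ s)
  obtain ⟨a, ha1, ha2⟩ : ∃ a : E ⟶ pullback p d₀,
      a ≫ pullback.fst p d₀ = 𝟙 E ∧ a ≫ pullback.snd p d₀ = p ≫ s :=
    ⟨pullback.lift (𝟙 E) (p ≫ s)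
        (by rw [Category.id_comp, Category.assoc, hs₀, Category.comp_id]),
      pullback.lift_fst _ _ _, pullback.lift_snd _ _ _⟩
  have hwa : FC.Weq a :=
    FC.weq_of_comp_left a _ hfst0.2 (by rw [ha1]; exact FC.weq_iso _)
  -- K = Np ×_B E, over p' = snd ≫ d₁ and p
  haveI hPK := FC.hasPullback_of_fib (pullback.snd p d₀ ≫ d₁) p hp
  have hKcond : pullback.fst (pullback.snd p d₀ ≫ d₁) p ≫ (pullback.snd p d₀ ≫ d₁) =
      pullback.snd (pullback.snd p d₀ ≫ d₁) p ≫ p := pullback.condition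
  have hfstK : FC.Fib (pullback.fst (pullback.snd p d₀ ≫ d₁) p) :=
    FC.fib_pullback _ p hp
  -- the map l = (a, 1) : E ⟶ K
  obtain ⟨l, hl1, hl2⟩ : ∃ l : E ⟶ pullback (pullback.snd p d₀ ≫ d₁) p,
      l ≫ pullback.fst (pullback.snd p d₀ ≫ d₁) p = a ∧
      l ≫ pullback.snd (pullback.snd p d₀ ≫ d₁) p = 𝟙 E :=
    ⟨pullback.lift a (𝟙 E)
        (by rw [← Category.assoc, ha2, Category.assoc, hs₁, Category.comp_id,
          Category.id_comp]),
      pullback.lift_fst _ _ _, pullback.lift_snd _ _ _⟩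
  -- a path object for K
  obtain ⟨KI, sK, e₀, e₁, hsK, hdK, h₀K, h₁K⟩ :=
    FC.path (pullback (pullback.snd p d₀ ≫ d₁) p)
  obtain ⟨⟨he₀f, he₀w⟩, -⟩ := FC.path_triv hsK hdK h₀K h₁K
  -- the mapping path space NL of l (this is a good path object for E)
  haveI hPN := FC.hasPullback_of_fib l e₀ he₀f
  have hfstN := FC.trivFib_pullback l e₀ he₀f he₀w
  have hNcond : pullback.fst l e₀ ≫ l = pullback.snd l e₀ ≫ e₀ := pullback.condition
  obtain ⟨σ, hσ1, hσ2⟩ : ∃ σ : E ⟶ pullback l e₀,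
      σ ≫ pullback.fst l e₀ = 𝟙 E ∧ σ ≫ pullback.snd l e₀ = l ≫ sK :=
    ⟨pullback.lift (𝟙 E) (l ≫ sK)
        (by rw [Category.id_comp, Category.assoc, h₀K, Category.comp_id]),
      pullback.lift_fst _ _ _, pullback.lift_snd _ _ _⟩
  have hwσ : FC.Weq σ :=
    FC.weq_of_comp_left σ _ hfstN.2 (by rw [hσ1]; exact FC.weq_iso _)
  -- Ψ : NL ⟶ K, the fibration of the factorization lemma applied to l
  obtain ⟨Ψ, hΨdef⟩ : ∃ Ψ : pullback l e₀ ⟶ pullback (pullback.snd p d₀ ≫ d₁) p,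
      Ψ = pullback.snd l e₀ ≫ e₁ := ⟨_, rfl⟩
  have hσΨ : σ ≫ Ψ = l := by
    rw [hΨdef, ← Category.assoc, hσ2, Category.assoc, h₁K, Category.comp_id]
  -- Ψ is a fibration (standard factorization-lemma argument)
  have sqD : IsPullback (prod.lift (pullback.fst l e₀) Ψ) (pullback.snd l e₀)
      (prod.map l (𝟙 (pullback (pullback.snd p d₀ ≫ d₁) p))) (prod.lift e₀ e₁) := by
    have comm : prod.lift (pullback.fst l e₀) Ψ ≫
        prod.map l (𝟙 (pullback (pullback.snd p d₀ ≫ d₁) p)) =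
        pullback.snd l e₀ ≫ prod.lift e₀ e₁ := by
      apply Limits.prod.hom_ext
      · simp only [Category.assoc, prod.map_fst, prod.lift_fst_assoc, prod.lift_fst]
        exact hNcond
      · simp only [Category.assoc, prod.map_snd, Category.comp_id, prod.lift_snd]
        exact hΨdef
    have hsnd : ∀ sc : PullbackCone
        (prod.map l (𝟙 (pullback (pullback.snd p d₀ ≫ d₁) p))) (prod.lift e₀ e₁),
        sc.fst ≫ prod.snd = sc.snd ≫ e₁ := by
      intro sc
      calc sc.fst ≫ prod.snd
          = sc.fst ≫ prod.map l (𝟙 (pullback (pullback.snd p d₀ ≫ d₁) p)) ≫ prod.snd := by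
            rw [prod.map_snd, Category.comp_id]
        _ = (sc.snd ≫ prod.lift e₀ e₁) ≫ prod.snd := by
            rw [← Category.assoc, sc.condition]
        _ = sc.snd ≫ e₁ := by simp only [Category.assoc, prod.lift_snd]
    have hfstc : ∀ sc : PullbackCone
        (prod.map l (𝟙 (pullback (pullback.snd p d₀ ≫ d₁) p))) (prod.lift e₀ e₁),
        (sc.fst ≫ prod.fst) ≫ l = sc.snd ≫ e₀ := by
      intro sc
      calc (sc.fst ≫ prod.fst) ≫ l
          = sc.fst ≫ prod.map l (𝟙 (pullback (pullback.snd p d₀ ≫ d₁) p)) ≫ prod.fst := by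
            rw [prod.map_fst]; simp only [Category.assoc]
        _ = (sc.snd ≫ prod.lift e₀ e₁) ≫ prod.fst := by
            rw [← Category.assoc, sc.condition]
        _ = sc.snd ≫ e₀ := by simp only [Category.assoc, prod.lift_fst]
    refine IsPullback.of_isLimit (PullbackCone.IsLimit.mk comm
      (fun sc => pullback.lift (sc.fst ≫ prod.fst) sc.snd (hfstc sc))
      (fun sc => ?_) (fun sc => pullback.lift_snd _ _ _) (fun sc m hm1 hm2 => ?_))
    · apply Limits.prod.hom_ext
      · simp only [Category.assoc, prod.lift_fst, pullback.lift_fst]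
      · simp only [Category.assoc, prod.lift_snd]
        rw [hΨdef, reassoc_of% (pullback.lift_snd (sc.fst ≫ prod.fst) sc.snd (hfstc sc))]
        exact (hsnd sc).symm
    · apply pullback.hom_ext
      · rw [pullback.lift_fst]
        have e : m ≫ pullback.fst l e₀ =
            (m ≫ prod.lift (pullback.fst l e₀) Ψ) ≫ prod.fst := by
          simp only [Category.assoc, prod.lift_fst]
        rw [e, hm1]
      · rw [pullback.lift_snd]; exact hm2
  have hΨf : FC.Fib Ψ := by
    have h1 : FC.Fib (prod.lift (pullback.fst l e₀) Ψ) := FC.fib_of_isPullback sqD hdK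
    have h2 := FC.fib_comp _ _ h1
      (FC.fib_prod E (pullback (pullback.snd p d₀ ≫ d₁) p)).2
    rwa [prod.lift_snd] at h2
  -- Φ : NL ⟶ Np, the "start point + projected path" map, a trivial fibration
  obtain ⟨Φ, hΦdef⟩ : ∃ Φ : pullback l e₀ ⟶ pullback p d₀,
      Φ = Ψ ≫ pullback.fst (pullback.snd p d₀ ≫ d₁) p := ⟨_, rfl⟩
  have hΦf : FC.Fib Φ := by rw [hΦdef]; exact FC.fib_comp _ _ hΨf hfstK
  have hσΦ : σ ≫ Φ = a := by rw [hΦdef, ← Category.assoc, hσΨ, hl1]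
  have hΦw : FC.Weq Φ := FC.weq_of_comp_right σ Φ hwσ (by rw [hσΦ]; exact hwa)
  -- Q = PI ×_B E over d₁ and p
  haveI hPQ := FC.hasPullback_of_fib d₁ p hp
  have hQcond : pullback.fst d₁ p ≫ d₁ = pullback.snd d₁ p ≫ p := pullback.condition
  have hsndQ : FC.Fib (pullback.snd d₁ p) ∧ FC.Weq (pullback.snd d₁ p) :=
    FC.trivFib_of_isPullback (IsPullback.of_hasPullback d₁ p).flip hd₁f hd₁w
  obtain ⟨ς, hς1, hς2⟩ : ∃ ς : E ⟶ pullback d₁ p,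
      ς ≫ pullback.fst d₁ p = p ≫ s ∧ ς ≫ pullback.snd d₁ p = 𝟙 E :=
    ⟨pullback.lift (p ≫ s) (𝟙 E)
        (by rw [Category.assoc, hs₁, Category.comp_id, Category.id_comp]),
      pullback.lift_fst _ _ _, pullback.lift_snd _ _ _⟩
  have hwς : FC.Weq ς :=
    FC.weq_of_comp_left ς _ hsndQ.2 (by rw [hς2]; exact FC.weq_iso _)
  -- θ : K ⟶ Q, forgetting the first component; a fibration
  obtain ⟨θ, hθ1, hθ2⟩ : ∃ θ : pullback (pullback.snd p d₀ ≫ d₁) p ⟶ pullback d₁ p,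
      θ ≫ pullback.fst d₁ p =
        pullback.fst (pullback.snd p d₀ ≫ d₁) p ≫ pullback.snd p d₀ ∧
      θ ≫ pullback.snd d₁ p = pullback.snd (pullback.snd p d₀ ≫ d₁) p :=
    ⟨pullback.lift (pullback.fst (pullback.snd p d₀ ≫ d₁) p ≫ pullback.snd p d₀)
        (pullback.snd (pullback.snd p d₀ ≫ d₁) p)
        (by rw [Category.assoc]; exact hKcond),
      pullback.lift_fst _ _ _, pullback.lift_snd _ _ _⟩
  have sqE : IsPullback θ (pullback.fst (pullback.snd p d₀ ≫ d₁) p)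
      (pullback.fst d₁ p) (pullback.snd p d₀) := by
    have hlc : ∀ sc : PullbackCone (pullback.fst d₁ p) (pullback.snd p d₀),
        sc.snd ≫ (pullback.snd p d₀ ≫ d₁) = (sc.fst ≫ pullback.snd d₁ p) ≫ p := by
      intro sc
      simp only [Category.assoc]
      rw [← hQcond, reassoc_of% sc.condition]
    refine IsPullback.of_isLimit (PullbackCone.IsLimit.mk hθ1
      (fun sc => pullback.lift sc.snd (sc.fst ≫ pullback.snd d₁ p) (hlc sc))
      (fun sc => ?_) (fun sc => pullback.lift_fst _ _ _) (fun sc m hm1 hm2 => ?_))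
    · apply pullback.hom_ext
      · simp only [Category.assoc]
        rw [hθ1, reassoc_of% (pullback.lift_fst sc.snd
          (sc.fst ≫ pullback.snd d₁ p) (hlc sc))]
        exact sc.condition.symm
      · simp only [Category.assoc]
        rw [hθ2, pullback.lift_snd]
    · apply pullback.hom_ext
      · rw [pullback.lift_fst]; exact hm2
      · rw [pullback.lift_snd, ← hθ2, ← Category.assoc, hm1]
  have hθf : FC.Fib θ := FC.fib_of_isPullback sqE hsnd0
  -- Φ' : NL ⟶ Q, the "projected path + end point" map, a trivial fibration
  obtain ⟨Φ', hΦ'def⟩ : ∃ Φ' : pullback l e₀ ⟶ pullback d₁ p, Φ' = Ψ ≫ θ := ⟨_, rfl⟩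
  have hΦ'f : FC.Fib Φ' := by rw [hΦ'def]; exact FC.fib_comp _ _ hΨf hθf
  have hA : Φ' ≫ pullback.fst d₁ p = Φ ≫ pullback.snd p d₀ := by
    rw [hΦ'def, hΦdef]
    simp only [Category.assoc]
    rw [hθ1]
  have hB : Φ' ≫ pullback.snd d₁ p = Ψ ≫ pullback.snd (pullback.snd p d₀ ≫ d₁) p := by
    rw [hΦ'def, Category.assoc, hθ2]
  have hσΦ' : σ ≫ Φ' = ς := by
    apply pullback.hom_ext
    · rw [Category.assoc, hA, ← Category.assoc, hσΦ, ha2, hς1]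
    · rw [Category.assoc, hB, ← Category.assoc, hσΨ, hl2, hς2]
  have hΦ'w : FC.Weq Φ' := FC.weq_of_comp_right σ Φ' hwσ (by rw [hσΦ']; exact hwς)
  -- PB₁ : the space of paths in B ending at the base point
  haveI hPB := FC.hasPullback_of_fib (hInit.to B) d₁ hd₁f
  have h1cond : pullback.fst (hInit.to B) d₁ ≫ hInit.to B =
      pullback.snd (hInit.to B) d₁ ≫ d₁ := pullback.condition
  have hfst₁ := FC.trivFib_pullback (hInit.to B) d₁ hd₁f hd₁w
  -- Q₀ = F × PB₁
  haveI hPQ₀ := FC.hasPullback_of_fib (FC.isTerminal.from F)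
    (pullback.fst (hInit.to B) d₁) hfst₁.1
  have hQ₀cond : pullback.fst (FC.isTerminal.from F) (pullback.fst (hInit.to B) d₁) ≫
      FC.isTerminal.from F =
      pullback.snd (FC.isTerminal.from F) (pullback.fst (hInit.to B) d₁) ≫
        pullback.fst (hInit.to B) d₁ := pullback.condition
  have hfstQ₀ := FC.trivFib_pullback (FC.isTerminal.from F)
    (pullback.fst (hInit.to B) d₁) hfst₁.1 hfst₁.2
  -- ω : Q₀ ⟶ Q
  obtain ⟨ω, hω1, hω2⟩ : ∃ ω : pullback (FC.isTerminal.from F)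
      (pullback.fst (hInit.to B) d₁) ⟶ pullback d₁ p,
      ω ≫ pullback.fst d₁ p =
        pullback.snd (FC.isTerminal.from F) (pullback.fst (hInit.to B) d₁) ≫
          pullback.snd (hInit.to B) d₁ ∧
      ω ≫ pullback.snd d₁ p =
        pullback.fst (FC.isTerminal.from F) (pullback.fst (hInit.to B) d₁) ≫ i := by
    refine ⟨pullback.lift
      (pullback.snd (FC.isTerminal.from F) (pullback.fst (hInit.to B) d₁) ≫
        pullback.snd (hInit.to B) d₁)
      (pullback.fst (FC.isTerminal.from F) (pullback.fst (hInit.to B) d₁) ≫ i) ?_,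
      pullback.lift_fst _ _ _, pullback.lift_snd _ _ _⟩
    rw [Category.assoc, ← h1cond, ← Category.assoc, ← hQ₀cond, Category.assoc, ← hw,
      ← Category.assoc]
  -- HF' = pullback of Φ along j : the refined homotopy fibre
  haveI hPH := FC.hasPullback_of_fib j Φ hΦf
  have hHcond : pullback.fst j Φ ≫ j = pullback.snd j Φ ≫ Φ := pullback.condition
  have htv := FC.trivFib_pullback j Φ hΦf hΦw
  -- the basic vanishing statement
  have hv : pullback.snd j Φ ≫ Φ ≫ (pullback.snd p d₀ ≫ d₁) =
      FC.isTerminal.from (pullback j Φ) ≫ hInit.to B := by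
    rw [← reassoc_of% hHcond, hw']
    simp only [← Category.assoc]
    congr 1
    exact FC.isTerminal.hom_ext _ _
  have hD1p : Ψ ≫ pullback.snd (pullback.snd p d₀ ≫ d₁) p ≫ p =
      Φ ≫ (pullback.snd p d₀ ≫ d₁) := by
    rw [← hKcond, hΦdef]
    simp only [Category.assoc]
  -- ρ : HF' ⟶ F, the endpoint map
  obtain ⟨ρ, hρ⟩ : ∃ ρ : pullback j Φ ⟶ F, ρ ≫ i =
      pullback.snd j Φ ≫ Ψ ≫ pullback.snd (pullback.snd p d₀ ≫ d₁) p := by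
    have wρ : (pullback.snd j Φ ≫ Ψ ≫ pullback.snd (pullback.snd p d₀ ≫ d₁) p) ≫ p =
        FC.isTerminal.from (pullback j Φ) ≫ hInit.to B := by
      simp only [Category.assoc]
      rw [hD1p]
      exact hv
    exact ⟨PullbackCone.IsLimit.lift hlim.some _ _ wρ,
      PullbackCone.IsLimit.lift_fst hlim.some _ _ wρ⟩
  -- bm : HF' ⟶ PB₁
  obtain ⟨bm, hbm1, hbm2⟩ : ∃ bm : pullback j Φ ⟶ pullback (hInit.to B) d₁,
      bm ≫ pullback.fst (hInit.to B) d₁ = FC.isTerminal.from (pullback j Φ) ∧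
      bm ≫ pullback.snd (hInit.to B) d₁ =
        pullback.snd j Φ ≫ Φ ≫ pullback.snd p d₀ := by
    refine ⟨pullback.lift (FC.isTerminal.from (pullback j Φ))
      (pullback.snd j Φ ≫ Φ ≫ pullback.snd p d₀) ?_,
      pullback.lift_fst _ _ _, pullback.lift_snd _ _ _⟩
    simp only [Category.assoc]
    exact hv.symm
  -- ρ₁ : HF' ⟶ Q₀
  obtain ⟨ρ₁, hρ₁1, hρ₁2⟩ : ∃ ρ₁ : pullback j Φ ⟶
      pullback (FC.isTerminal.from F) (pullback.fst (hInit.to B) d₁),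
      ρ₁ ≫ pullback.fst (FC.isTerminal.from F) (pullback.fst (hInit.to B) d₁) = ρ ∧
      ρ₁ ≫ pullback.snd (FC.isTerminal.from F) (pullback.fst (hInit.to B) d₁) = bm :=
    ⟨pullback.lift ρ bm (FC.isTerminal.hom_ext _ _),
      pullback.lift_fst _ _ _, pullback.lift_snd _ _ _⟩
  have hρ₁ω : ρ₁ ≫ ω = pullback.snd j Φ ≫ Φ' := by
    apply pullback.hom_ext
    · simp only [Category.assoc]
      rw [hω1, reassoc_of% hρ₁2, hbm2, hA]
    · simp only [Category.assoc]
      rw [hω2, reassoc_of% hρ₁1, hρ, hB]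
  -- the key pullback square exhibiting ρ₁ as a pullback of the trivial fibration Φ'
  have hC1 : ∀ sc : PullbackCone ω Φ', (sc.snd ≫ Φ) ≫ (pullback.snd p d₀ ≫ d₁) =
      FC.isTerminal.from sc.pt ≫ hInit.to B := by
    intro sc
    simp only [Category.assoc]
    rw [← reassoc_of% hA, ← reassoc_of% sc.condition, reassoc_of% hω1, ← h1cond]
    simp only [← Category.assoc]
    congr 1
    exact FC.isTerminal.hom_ext _ _
  have hTlift : ∀ sc : PullbackCone ω Φ', { m : sc.pt ⟶ HF // m ≫ j = sc.snd ≫ Φ } :=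
    fun sc => ⟨PullbackCone.IsLimit.lift hlim'.some _ _ (hC1 sc),
      PullbackCone.IsLimit.lift_fst hlim'.some _ _ (hC1 sc)⟩
  have sqC : IsPullback ρ₁ (pullback.snd j Φ) ω Φ' := by
    refine IsPullback.of_isLimit (PullbackCone.IsLimit.mk hρ₁ω
      (fun sc => pullback.lift (hTlift sc).1 sc.snd (hTlift sc).2)
      (fun sc => ?_) (fun sc => pullback.lift_snd _ _ _) (fun sc m hm1 hm2 => ?_))
    · apply pullback.hom_ext
      · rw [Category.assoc, hρ₁1]
        apply mono_i
        rw [Category.assoc, hρ,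
          reassoc_of% (pullback.lift_snd (hTlift sc).1 sc.snd (hTlift sc).2), ← hB,
          ← reassoc_of% sc.condition, hω2]
        simp only [Category.assoc]
      · rw [Category.assoc, hρ₁2]
        apply pullback.hom_ext
        · exact FC.isTerminal.hom_ext _ _
        · simp only [Category.assoc]
          rw [hbm2, reassoc_of% (pullback.lift_snd (hTlift sc).1 sc.snd (hTlift sc).2),
            ← hA, ← reassoc_of% sc.condition, hω1]
    · apply pullback.hom_ext
      · apply mono_j
        simp only [Category.assoc]
        rw [hHcond]
        rw [reassoc_of% hm2,
          reassoc_of% (pullback.lift_snd (hTlift sc).1 sc.snd (hTlift sc).2)]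
      · rw [pullback.lift_snd]; exact hm2
  have hwρ₁ := (FC.trivFib_of_isPullback sqC hΦ'f hΦ'w).2
  have hwρ : FC.Weq ρ := by
    rw [← hρ₁1]; exact FC.weq_comp _ _ hwρ₁ hfstQ₀.2
  -- κ : F ⟶ HF', the constant-path section
  have hκw : u ≫ j = (i ≫ σ) ≫ Φ := by
    apply pullback.hom_ext
    · simp only [Category.assoc]
      rw [hu1, reassoc_of% hσΦ, ha1, Category.comp_id]
    · simp only [Category.assoc]
      rw [hu2, reassoc_of% hσΦ, ha2]
  obtain ⟨κ, hκ1, hκ2⟩ : ∃ κ : F ⟶ pullback j Φ,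
      κ ≫ pullback.fst j Φ = u ∧ κ ≫ pullback.snd j Φ = i ≫ σ :=
    ⟨pullback.lift u (i ≫ σ) hκw, pullback.lift_fst _ _ _, pullback.lift_snd _ _ _⟩
  have hκρ : κ ≫ ρ = 𝟙 F := by
    apply mono_i
    rw [Category.assoc, hρ, Category.id_comp, reassoc_of% hκ2, reassoc_of% hσΨ, hl2,
      Category.comp_id]
  have hwκ : FC.Weq κ :=
    FC.weq_of_comp_left κ ρ hwρ (by rw [hκρ]; exact FC.weq_iso _)
  have hfinal : FC.Weq (κ ≫ pullback.fst j Φ) := FC.weq_comp _ _ hwκ htv.2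
  rwa [hκ1] at hfinal
end

section
/- Every Schochet fibration of C*-algebras is surjective: if p : E → B is a *-homomorphism such that for all C*-algebras D the induced map Hom(D,E) → Hom(D,B) on morphism spaces is a π₀-fibration, then p is surjective. -/
open unitInterval

/-- the topology of pointwise (norm) convergence on spaces of ⋆-homomorphisms. -/
instance starHomTopology (A B : Type*) [NonUnitalCStarAlgebra A] [NonUnitalCStarAlgebra B] :
    TopologicalSpace (A →⋆ₙₐ[ℂ] B) :=
  TopologicalSpace.induced (fun φ => (φ : A → B)) inferInstance

def IsPi0Fibration {E B : Type*} [TopologicalSpace E] [TopologicalSpace B] (p : E → B) : Prop :=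
  ∀ (h : C(unitInterval, B)) (e : E), p e = h 0 →
    ∃ H : C(unitInterval, E), H 0 = e ∧ ∀ t, p (H t) = h t

/-- The non-unital star subalgebra of `C(I, B)` consisting of functions vanishing at `0`. -/
def vanishAtZero (B : Type*) [NonUnitalCStarAlgebra B] :
    NonUnitalStarSubalgebra ℂ C(unitInterval, B) where
  carrier := {f | f 0 = 0}
  add_mem' hf hg := by simp_all
  zero_mem' := rfl
  mul_mem' hf hg := by simp_all
  smul_mem' c f hf := by simp_all
  star_mem' hf := by simp_all

instance vanishAtZero_isClosed (B : Type*) [NonUnitalCStarAlgebra B] :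
    IsClosed ((vanishAtZero B : Set C(unitInterval, B))) := by
  have : (vanishAtZero B : Set C(unitInterval, B)) =
      (fun f : C(unitInterval, B) => f 0) ⁻¹' {0} := rfl
  rw [this]
  exact isClosed_singleton.preimage (continuous_eval_const (0 : unitInterval))

/-- Evaluation at `t` as a non-unital star algebra homomorphism. -/
def evalHom {B : Type*} [NonUnitalCStarAlgebra B] (t : unitInterval) :
    vanishAtZero B →⋆ₙₐ[ℂ] B where
  toFun f := (f : C(unitInterval, B)) t
  map_smul' _ _ := rfl
  map_zero' := rfl
  map_add' _ _ := rfl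
  map_mul' _ _ := rfl
  map_star' _ := rfl

/-- Every Schochet fibration of C*-algebras is surjective. -/
theorem schochetFibration_surjective {E B : Type u} [NonUnitalCStarAlgebra E]
    [NonUnitalCStarAlgebra B] (p : E →⋆ₙₐ[ℂ] B)
    (hp : ∀ (D : Type u) [NonUnitalCStarAlgebra D],
      IsPi0Fibration (fun φ : D →⋆ₙₐ[ℂ] E => p.comp φ)) :
    Function.Surjective p := by
  intro b
  -- the path of evaluation homomorphisms
  have hcont : Continuous fun t : unitInterval => (evalHom (B := B) t) := by
    rw [continuous_induced_rng]
    exact continuous_pi fun f => ((f : C(unitInterval, B)).continuous)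
  let h : C(unitInterval, vanishAtZero B →⋆ₙₐ[ℂ] B) := ⟨fun t => evalHom t, hcont⟩
  have hstart : p.comp (0 : vanishAtZero B →⋆ₙₐ[ℂ] E) = h 0 := by
    ext f
    show p 0 = (f : C(unitInterval, B)) 0
    simpa using (f.2.symm)
  obtain ⟨H, -, hH⟩ := hp (vanishAtZero B) h 0 hstart
  -- the function `t ↦ t • b` belongs to `vanishAtZero B`
  let f : vanishAtZero B := ⟨⟨fun t => (t : ℝ) • b, by fun_prop⟩, show ((0 : unitInterval) : ℝ) • b = 0 by rw [Set.Icc.coe_zero, zero_smul]⟩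
  refine ⟨H 1 f, ?_⟩
  have := DFunLike.congr_fun (hH 1) f
  simp only [NonUnitalStarAlgHom.comp_apply] at this
  rw [this]
  show ((1 : unitInterval) : ℝ) • b = b
  simp
end

section
/- Given a pointed category of fibrant objects C and a homology theory H on C, declaring the weak equivalences to be the H-equivalences and keeping the same fibrations yields again a pointed category of fibrant objects (with the same path objects). In particular H-equivalences satisfy two-out-of-three and pullbacks of fibrations that are H-equivalences along arbitrary maps are H-equivalences. -/
open CategoryTheory CategoryTheory.Limits

universe v u

universe w

/-- A homology theory on a pointed category of fibrant objects, encoded as a ℤ-graded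
family of abelian-group-valued functors (`H n A` plays the role of `H(A, n) = H(Ωⁿ A)`),
which is homotopy invariant and has natural long exact sequences for fibration sequences
(fibre → total space → base). -/
structure HomologyTheory (C : Type u) [Category.{v} C] [HasBinaryProducts C]
    (FC : FibrantCategory C) (hInit : IsInitial FC.term) where
  /-- the graded homology groups -/
  H : ℤ → C → AddCommGrpCat.{w}
  /-- functoriality -/
  map : ∀ (n : ℤ) {A B : C}, (A ⟶ B) → (H n A ⟶ H n B)
  map_id : ∀ (n : ℤ) (A : C), map n (𝟙 A) = 𝟙 (H n A)
  map_comp : ∀ (n : ℤ) {A B D : C} (f : A ⟶ B) (g : B ⟶ D),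
    map n (f ≫ g) = map n f ≫ map n g
  /-- homotopy invariance: weak equivalences induce isomorphisms -/
  weq_iso : ∀ (n : ℤ) {A B : C} (f : A ⟶ B), FC.Weq f → Function.Bijective (map n f)
  /-- the boundary map of the long exact sequence of a fibration with its fibre -/
  δ : ∀ (n : ℤ) {F E B : C} (i : F ⟶ E) (p : E ⟶ B), FC.Fib p →
    ∀ (hw : i ≫ p = FC.isTerminal.from F ≫ hInit.to B),
      Nonempty (IsLimit (PullbackCone.mk i (FC.isTerminal.from F) hw)) →
        (H n B ⟶ H (n - 1) F)
  exact_E : ∀ (n : ℤ) {F E B : C} (i : F ⟶ E) (p : E ⟶ B) (hp : FC.Fib p)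
    (hw : i ≫ p = FC.isTerminal.from F ≫ hInit.to B)
    (hlim : Nonempty (IsLimit (PullbackCone.mk i (FC.isTerminal.from F) hw))),
    Function.Exact (map n i) (map n p)
  exact_B : ∀ (n : ℤ) {F E B : C} (i : F ⟶ E) (p : E ⟶ B) (hp : FC.Fib p)
    (hw : i ≫ p = FC.isTerminal.from F ≫ hInit.to B)
    (hlim : Nonempty (IsLimit (PullbackCone.mk i (FC.isTerminal.from F) hw))),
    Function.Exact (map n p) (δ n i p hp hw hlim)
  exact_F : ∀ (n : ℤ) {F E B : C} (i : F ⟶ E) (p : E ⟶ B) (hp : FC.Fib p)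
    (hw : i ≫ p = FC.isTerminal.from F ≫ hInit.to B)
    (hlim : Nonempty (IsLimit (PullbackCone.mk i (FC.isTerminal.from F) hw))),
    Function.Exact (δ n i p hp hw hlim) (map (n - 1) i)

section AuxLemmas

variable {C : Type u} [Category.{v} C] [HasBinaryProducts C]
  {FC : FibrantCategory C} {hInit : IsInitial FC.term}

/-- If a fibration is an `H`-equivalence, its fibre is `H`-acyclic. -/
lemma HomologyTheory.acyclic_fibre (HT : HomologyTheory.{v, u, w} C FC hInit)
    {F E B : C} (i : F ⟶ E) (p : E ⟶ B) (hp : FC.Fib p)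
    (hw : i ≫ p = FC.isTerminal.from F ≫ hInit.to B)
    (hlim : Nonempty (IsLimit (PullbackCone.mk i (FC.isTerminal.from F) hw)))
    (hpeq : ∀ n : ℤ, Function.Bijective (HT.map n p)) (n : ℤ) (x : HT.H n F) :
    x = 0 := by
  have key : ∀ (m : ℤ) (x : HT.H (m - 1) F), x = 0 := by
    intro m x
    have h1 : HT.map (m - 1) p (HT.map (m - 1) i x) = 0 :=
      (HT.exact_E (m - 1) i p hp hw hlim).apply_apply_eq_zero x
    have h2 : HT.map (m - 1) i x = 0 := by
      apply (hpeq (m - 1)).1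
      simpa using h1
    have h3 := HT.exact_F m i p hp hw hlim
    obtain ⟨y, hy⟩ := (h3 x).mp h2
    obtain ⟨z, hz⟩ := (hpeq m).2 y
    rw [← hy, ← hz]
    exact (HT.exact_B m i p hp hw hlim).apply_apply_eq_zero z
  have e : n = n + 1 - 1 := by ring
  revert x
  rw [e]
  exact key (n + 1)

/-- If the fibre of a fibration is `H`-acyclic, the fibration is an `H`-equivalence. -/
lemma HomologyTheory.heq_of_acyclic_fibre (HT : HomologyTheory.{v, u, w} C FC hInit)
    {F E B : C} (i : F ⟶ E) (p : E ⟶ B) (hp : FC.Fib p)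
    (hw : i ≫ p = FC.isTerminal.from F ≫ hInit.to B)
    (hlim : Nonempty (IsLimit (PullbackCone.mk i (FC.isTerminal.from F) hw)))
    (hF : ∀ (n : ℤ) (x : HT.H n F), x = 0) (n : ℤ) :
    Function.Bijective (HT.map n p) := by
  constructor
  · intro a b hab
    have h0 : HT.map n p (a - b) = 0 := by rw [map_sub, hab, sub_self]
    obtain ⟨y, hy⟩ := ((HT.exact_E n i p hp hw hlim) (a - b)).mp h0
    rw [hF n y, map_zero] at hy
    exact sub_eq_zero.mp hy.symm
  · intro b
    exact ((HT.exact_B n i p hp hw hlim) b).mp (hF (n - 1) _)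

end AuxLemmas

/-- Given a pointed category of fibrant objects `C` and a homology theory `HT` on it,
taking the `H`-equivalences as the weak equivalences, keeping the same fibrations and
terminal (= zero) object, yields again a category of fibrant objects.  In particular
`H`-equivalences satisfy two-out-of-three, and the pullback of a fibration which is an
`H`-equivalence along an arbitrary morphism is again an `H`-equivalence. -/
theorem localized_fibrantCategory {C : Type u} [Category.{v} C] [HasBinaryProducts C]
    (FC : FibrantCategory C) (hInit : IsInitial FC.term)
    (HT : HomologyTheory.{v, u, w} C FC hInit) :
    ∃ FC' : FibrantCategory C,
      FC'.Fib = FC.Fib ∧ FC'.term = FC.term ∧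
        FC'.Weq = (fun _ _ f => ∀ n : ℤ, Function.Bijective (HT.map n f) :
          MorphismProperty C) := by
  set W : MorphismProperty C :=
    (fun _ _ f => ∀ n : ℤ, Function.Bijective (HT.map n f)) with hW
  have hcoe : ∀ (n : ℤ) {A B D : C} (f : A ⟶ B) (g : B ⟶ D),
      ⇑(HT.map n (f ≫ g)) = ⇑(HT.map n g) ∘ ⇑(HT.map n f) := by
    intro n A B D f g
    rw [HT.map_comp]
    rfl
  refine ⟨{
    Fib := FC.Fib
    Weq := W
    term := FC.term
    isTerminal := FC.isTerminal
    fib_comp := FC.fib_comp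
    fib_iso := FC.fib_iso
    weq_iso := ?_
    weq_comp := ?_
    weq_of_comp_left := ?_
    weq_of_comp_right := ?_
    fib_term := FC.fib_term
    hasPullback_of_fib := FC.hasPullback_of_fib
    fib_pullback := FC.fib_pullback
    trivFib_pullback := ?_
    path := ?_ }, rfl, rfl, rfl⟩
  · -- isomorphisms are H-equivalences
    intro A B f hf n
    haveI : IsIso (HT.map n f) := by
      refine ⟨HT.map n (inv f), ?_, ?_⟩
      · rw [← HT.map_comp, IsIso.hom_inv_id, HT.map_id]
      · rw [← HT.map_comp, IsIso.inv_hom_id, HT.map_id]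
    exact ConcreteCategory.bijective_of_isIso (HT.map n f)
  · -- composition
    intro A B D f g hf hg n
    rw [hcoe n f g]
    exact (hg n).comp (hf n)
  · -- two out of three: left
    intro A B D f g hg hfg n
    have := hfg n
    rw [hcoe n f g] at this
    exact (Function.Bijective.of_comp_iff' (hg n) _).mp this
  · -- two out of three: right
    intro A B D f g hf hfg n
    have := hfg n
    rw [hcoe n f g] at this
    exact (Function.Bijective.of_comp_iff _ (hf n)).mp this
  · -- pullback of trivial fibrations
    intro A B E f p _ hp hpw
    refine ⟨FC.fib_pullback f p hp, ?_⟩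
    -- the fibre of `p`
    haveI : HasPullback (hInit.to B) p := FC.hasPullback_of_fib _ p hp
    set F := pullback (hInit.to B) p with hF
    set i : F ⟶ E := pullback.snd (hInit.to B) p with hi
    have hw : i ≫ p = FC.isTerminal.from F ≫ hInit.to B := by
      rw [← pullback.condition]
      congr 1
      exact FC.isTerminal.hom_ext _ _
    have hlim1 : IsLimit (PullbackCone.mk i (FC.isTerminal.from F) hw) := by
      refine PullbackCone.IsLimit.mk hw
        (fun s => pullback.lift s.snd s.fst s.condition.symm) ?_ ?_ ?_
      · intro s
        simpa [hi] using pullback.lift_snd s.snd s.fst s.condition.symm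
      · intro s
        exact FC.isTerminal.hom_ext _ _
      · intro s m hm1 _
        apply pullback.hom_ext
        · exact FC.isTerminal.hom_ext _ _
        · exact hm1.trans (pullback.lift_snd _ _ _).symm
    -- the fibre of `p` is acyclic
    have acyc : ∀ (n : ℤ) (x : HT.H n F), x = 0 :=
      HT.acyclic_fibre i p hp hw ⟨hlim1⟩ hpw
    -- `F` is also the fibre of the pullback of `p`
    have htoB : hInit.to A ≫ f = hInit.to B := hInit.hom_ext _ _
    set j : F ⟶ pullback f p :=
      pullback.lift (FC.isTerminal.from F ≫ hInit.to A) i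
        (by rw [Category.assoc, htoB, ← hw]) with hj
    have hw2 : j ≫ pullback.fst f p = FC.isTerminal.from F ≫ hInit.to A :=
      pullback.lift_fst _ _ _
    have hjsnd : j ≫ pullback.snd f p = i := pullback.lift_snd _ _ _
    have hlim2 : IsLimit (PullbackCone.mk j (FC.isTerminal.from F) hw2) := by
      refine PullbackCone.IsLimit.mk hw2 (fun s =>
        PullbackCone.IsLimit.lift hlim1 (s.fst ≫ pullback.snd f p) s.snd
          (by rw [Category.assoc, ← pullback.condition, ← Category.assoc,
                s.condition, Category.assoc, htoB])) ?_ ?_ ?_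
      · intro s
        apply pullback.hom_ext
        · refine (Category.assoc _ _ _).trans ?_
          rw [hw2]
          refine (Category.assoc _ _ _).symm.trans (Eq.trans ?_ s.condition.symm)
          congr 1
          exact FC.isTerminal.hom_ext _ _
        · refine (Category.assoc _ _ _).trans ?_
          rw [hjsnd]
          exact PullbackCone.IsLimit.lift_fst hlim1
            (s.fst ≫ pullback.snd f p) s.snd _
      · intro s
        exact FC.isTerminal.hom_ext _ _
      · intro s m hm1 _
        apply PullbackCone.IsLimit.hom_ext hlim1
        · have h1 : m ≫ i = s.fst ≫ pullback.snd f p := by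
            rw [← hjsnd, ← Category.assoc, hm1]
          exact h1.trans
            (PullbackCone.IsLimit.lift_fst hlim1
              (s.fst ≫ pullback.snd f p) s.snd _).symm
        · exact FC.isTerminal.hom_ext _ _
    exact HT.heq_of_acyclic_fibre j (pullback.fst f p)
      (FC.fib_pullback f p hp) hw2 ⟨hlim2⟩ acyc
  · -- path objects
    intro B
    obtain ⟨PI, s, d₀, d₁, hs, hfib, h0, h1⟩ := FC.path B
    exact ⟨PI, s, d₀, d₁, fun n => HT.weq_iso n s hs, hfib, h0, h1⟩
end
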